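/- Let d ≥ 2 and let e₁, e₂, e₃ be integers with 2 ≤ e₁ ≤ e₂ ≤ e₃ ≤ d, e₁ + e₂ + e₃ = 2d + 1, and e₂ < d. Let g₁, g₂, g₃ ∈ S_d be the cycles g₁ = (d, d−1, …, e₃, 1, 2, …, d−e₂), g₂ = (d−e₂+1, …, d), g₃ = (e₃, e₃−1, …, 1). Then the iterated commutator [g₁, [g₂, g₃]] is a nontrivial permutation; in particular it does not fix the point e₃. -/

import Mathlib

open scoped commutatorElement

private lemma nodup_map_range {f : ℕ → ℕ} {n : ℕ}
    (hf : ∀ i < n, ∀ j < n, f i = f j → i = j) :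
    ((List.range n).map f).Nodup := by
  rw [List.nodup_map_iff_inj_on List.nodup_range]
  intro i hi j hj h
  exact hf i (List.mem_range.1 hi) j (List.mem_range.1 hj) h

private lemma formPerm_map_range {f : ℕ → ℕ} {n : ℕ}
    (hf : ∀ i < n, ∀ j < n, f i = f j → i = j) {i : ℕ} (h : i < n) :
    ((List.range n).map f).formPerm (f i) = f ((i + 1) % n) := by
  have h' : i < ((List.range n).map f).length := by simpa
  have := List.formPerm_apply_getElem ((List.range n).map f) (nodup_map_range hf) i h'
  simpa using this

private lemma formPerm_map_range_fix {f : ℕ → ℕ} {n : ℕ} {x : ℕ}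
    (hx : ∀ i < n, f i ≠ x) : ((List.range n).map f).formPerm x = x := by
  apply List.formPerm_apply_of_notMem
  simp only [List.mem_map, List.mem_range, not_exists]
  rintro i ⟨hi, hfi⟩
  exact hx i hi hfi

private lemma append_eq_map_range (d e₂ e₃ : ℕ) :
    (((List.range (d - e₃ + 1)).map (fun j => d - j)) ++ (List.range (d - e₂)).map (· + 1))
    = (List.range (d - e₃ + 1 + (d - e₂))).map
        (fun j => if j ≤ d - e₃ then d - j else j - (d - e₃)) := by
  apply List.ext_getElem
  · simp
  intro i h1 h2
  simp only [List.getElem_map, List.getElem_range]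
  rcases lt_or_ge i (d - e₃ + 1) with h | h
  · rw [List.getElem_append_left (by simpa using h)]
    simp only [List.getElem_map, List.getElem_range]
    rw [if_pos (by omega)]
  · rw [List.getElem_append_right (by simpa using h)]
    simp only [List.getElem_map, List.getElem_range, List.length_map, List.length_range]
    rw [if_neg (by omega)]
    omega

private lemma inv_eval {g : Equiv.Perm ℕ} {x y : ℕ} (h : g y = x) : g⁻¹ x = y := by
  rw [← h]; simp

theorem stmt7 (d e₁ e₂ e₃ : ℕ) (hd : 2 ≤ d)
    (h1 : 2 ≤ e₁) (h12 : e₁ ≤ e₂) (h23 : e₂ ≤ e₃) (h3d : e₃ ≤ d) (h2d : e₂ < d)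
    (hsum : e₁ + e₂ + e₃ = 2 * d + 1)
    (g₁ g₂ g₃ : Equiv.Perm ℕ)
    (hg₁ : g₁ = (((List.range (d - e₃ + 1)).map (fun j => d - j)) ++
        (List.range (d - e₂)).map (· + 1)).formPerm)
    (hg₂ : g₂ = ((List.range e₂).map (fun j => d - e₂ + 1 + j)).formPerm)
    (hg₃ : g₃ = ((List.range e₃).map (fun j => e₃ - j)).formPerm) :
    ⁅g₁, ⁅g₂, g₃⁆⁆ ≠ 1 ∧ ⁅g₁, ⁅g₂, g₃⁆⁆ e₃ ≠ e₃ := by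
  -- basic arithmetic facts
  have hkey : d - e₂ + 2 ≤ e₃ := by omega
  have he₂ : 2 ≤ e₂ := by omega
  have he₃ : 2 ≤ e₃ := by omega
  -- rewrite g₁ as a single map over a range
  rw [append_eq_map_range d e₂ e₃] at hg₁
  -- injectivity facts
  have hinj₁ : ∀ i < d - e₃ + 1 + (d - e₂), ∀ j < d - e₃ + 1 + (d - e₂),
      (if i ≤ d - e₃ then d - i else i - (d - e₃)) =
      (if j ≤ d - e₃ then d - j else j - (d - e₃)) → i = j := by
    intro i hi j hj h
    split_ifs at h <;> omega
  have hinj₂ : ∀ i < e₂, ∀ j < e₂, d - e₂ + 1 + i = d - e₂ + 1 + j → i = j := by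
    intro i _ j _ h; omega
  have hinj₃ : ∀ i < e₃, ∀ j < e₃, e₃ - i = e₃ - j → i = j := by
    intro i hi j hj h; omega
  -- evaluation lemmas
  have E₂ : ∀ i, i < e₂ → g₂ (d - e₂ + 1 + i) = d - e₂ + 1 + ((i + 1) % e₂) := by
    intro i hi; rw [hg₂]; exact formPerm_map_range hinj₂ hi
  have E₂a : ∀ i x y : ℕ, i + 1 < e₂ → d - e₂ + 1 + i = x → d - e₂ + 2 + i = y →
      g₂ x = y := by
    intro i x y h hx hy
    subst hx; subst hy
    have := E₂ i (by omega)
    rw [Nat.mod_eq_of_lt (by omega)] at this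
    rw [this]; omega
  have E₂b : 0 < e₂ → g₂ d = d - e₂ + 1 := by
    intro h
    have := E₂ (e₂ - 1) (by omega)
    rw [show e₂ - 1 + 1 = e₂ by omega, Nat.mod_self] at this
    rw [show d - e₂ + 1 + (e₂ - 1) = d from by omega,
      show d - e₂ + 1 + 0 = d - e₂ + 1 from by omega] at this
    exact this
  have F₂ : ∀ x, x ≤ d - e₂ ∨ d < x → g₂ x = x := by
    intro x hx; rw [hg₂]
    exact formPerm_map_range_fix (fun i hi => by show d - e₂ + 1 + i ≠ x; omega)
  have E₃ : ∀ i, i < e₃ → g₃ (e₃ - i) = e₃ - ((i + 1) % e₃) := by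
    intro i hi; rw [hg₃]; exact formPerm_map_range hinj₃ hi
  have E₃a : ∀ i x y : ℕ, i + 1 < e₃ → e₃ - i = x → e₃ - (i + 1) = y → g₃ x = y := by
    intro i x y h hx hy
    subst hx; subst hy
    have := E₃ i (by omega)
    rw [Nat.mod_eq_of_lt (by omega)] at this
    exact this
  have E₃b : g₃ 1 = e₃ := by
    have := E₃ (e₃ - 1) (by omega)
    rw [show e₃ - 1 + 1 = e₃ by omega, Nat.mod_self] at this
    rw [show e₃ - (e₃ - 1) = 1 from by omega,
      show e₃ - 0 = e₃ from by omega] at this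
    exact this
  have F₃ : ∀ x, x = 0 ∨ e₃ < x → g₃ x = x := by
    intro x hx; rw [hg₃]
    exact formPerm_map_range_fix (fun i hi => by show e₃ - i ≠ x; omega)
  have E₁ : ∀ i, i < d - e₃ + 1 + (d - e₂) →
      g₁ (if i ≤ d - e₃ then d - i else i - (d - e₃)) =
      (if (i + 1) % (d - e₃ + 1 + (d - e₂)) ≤ d - e₃
        then d - ((i + 1) % (d - e₃ + 1 + (d - e₂)))
        else ((i + 1) % (d - e₃ + 1 + (d - e₂))) - (d - e₃)) := by
    intro i hi; rw [hg₁]; exact formPerm_map_range hinj₁ hi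
  -- branch-1 internal step of g₁ : d - i ↦ d - (i+1)
  have E₁a : ∀ i x y : ℕ, i + 1 ≤ d - e₃ → d - i = x → d - (i + 1) = y → g₁ x = y := by
    intro i x y h hx hy
    subst hx; subst hy
    have := E₁ i (by omega)
    rw [Nat.mod_eq_of_lt (by omega)] at this
    rw [if_pos (by omega), if_pos (by omega)] at this
    exact this
  -- transition step of g₁ : e₃ ↦ 1
  have E₁t : g₁ e₃ = 1 := by
    have := E₁ (d - e₃) (by omega)
    rw [Nat.mod_eq_of_lt (by omega)] at this
    rw [if_pos (by omega), if_neg (by omega)] at this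
    rw [show d - (d - e₃) = e₃ from by omega,
      show d - e₃ + 1 - (d - e₃) = 1 from by omega] at this
    exact this
  -- branch-2 internal step of g₁ : i - (d-e₃) ↦ i + 1 - (d-e₃)
  have E₁c : ∀ i x y : ℕ, d - e₃ < i → i + 1 < d - e₃ + 1 + (d - e₂) →
      i - (d - e₃) = x → i + 1 - (d - e₃) = y → g₁ x = y := by
    intro i x y h h' hx hy
    subst hx; subst hy
    have := E₁ i (by omega)
    rw [Nat.mod_eq_of_lt (by omega)] at this
    rw [if_neg (by omega), if_neg (by omega)] at this
    exact this
  -- wrap-around step of g₁ : d - e₂ ↦ d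
  have E₁d : 0 < d - e₂ → g₁ (d - e₂) = d := by
    intro h
    have := E₁ (d - e₃ + (d - e₂)) (by omega)
    rw [show d - e₃ + (d - e₂) + 1 = d - e₃ + 1 + (d - e₂) by omega, Nat.mod_self] at this
    rw [if_neg (by omega), if_pos (by omega)] at this
    rw [show d - e₃ + (d - e₂) - (d - e₃) = d - e₂ from by omega,
      show d - 0 = d from by omega] at this
    exact this
  have F₁ : ∀ x, x = 0 ∨ (d - e₂ < x ∧ x < e₃) ∨ d < x → g₁ x = x := by
    intro x hx; rw [hg₁]
    refine formPerm_map_range_fix (fun i hi => ?_)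
    show (if i ≤ d - e₃ then d - i else i - (d - e₃)) ≠ x
    split_ifs <;> omega
  -- common first steps
  have q1b : g₂ (e₃ - 1) = e₃ := E₂a (e₃ - (d - e₂) - 2) (e₃ - 1) e₃ (by omega) (by omega) (by omega)
  have q1 : g₂⁻¹ e₃ = e₃ - 1 := inv_eval q1b
  have q2b : g₃ e₃ = e₃ - 1 := E₃a 0 e₃ (e₃ - 1) (by omega) (by omega) (by omega)
  have q2 : g₃⁻¹ (e₃ - 1) = e₃ := inv_eval q2b
  have hne : ⁅g₁, ⁅g₂, g₃⁆⁆ e₃ ≠ e₃ := by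
    have expand : ⁅g₁, ⁅g₂, g₃⁆⁆ e₃ =
        g₁ (g₂ (g₃ (g₂⁻¹ (g₃⁻¹ (g₁⁻¹ (g₃ (g₂ (g₃⁻¹ (g₂⁻¹ e₃))))))))) := by
      simp [commutatorElement_def, mul_inv_rev, Equiv.Perm.mul_apply]
    rcases Nat.lt_or_ge e₃ d with hlt | hge
    · -- e₃ < d
      have q3 : g₂ e₃ = e₃ + 1 :=
        E₂a (e₃ - (d - e₂) - 1) e₃ (e₃ + 1) (by omega) (by omega) (by omega)
      rcases Nat.lt_or_ge (e₃ + 1) d with hlt2 | hge2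
      · -- Case A : e₃ + 2 ≤ d
        have q4 : g₃ (e₃ + 1) = e₃ + 1 := F₃ _ (by omega)
        have q10 : g₁ (e₃ + 2) = e₃ + 1 :=
          E₁a (d - e₃ - 2) (e₃ + 2) (e₃ + 1) (by omega) (by omega) (by omega)
        have q5 : g₁⁻¹ (e₃ + 1) = e₃ + 2 := inv_eval q10
        have q6 : g₃⁻¹ (e₃ + 2) = e₃ + 2 := inv_eval (F₃ _ (by omega))
        have q9 : g₂ (e₃ + 1) = e₃ + 2 :=
          E₂a (e₃ - (d - e₂)) (e₃ + 1) (e₃ + 2) (by omega) (by omega) (by omega)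
        have q7 : g₂⁻¹ (e₃ + 2) = e₃ + 1 := inv_eval q9
        rw [expand, q1, q2, q3, q4, q5, q6, q7, q4, q9, q10]
        omega
      · -- Case B : e₃ + 1 = d
        have heq : e₃ + 1 = d := by omega
        have q4 : g₃ (e₃ + 1) = e₃ + 1 := F₃ _ (by omega)
        have q5b : g₁ (d - e₂) = d := E₁d (by omega)
        have q5 : g₁⁻¹ (e₃ + 1) = d - e₂ := by rw [heq]; exact inv_eval q5b
        have q6b : g₃ (d - e₂ + 1) = d - e₂ :=
          E₃a (e₃ - (d - e₂) - 1) (d - e₂ + 1) (d - e₂) (by omega) (by omega) (by omega)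
        have q6 : g₃⁻¹ (d - e₂) = d - e₂ + 1 := inv_eval q6b
        have q9 : g₂ d = d - e₂ + 1 := E₂b (by omega)
        have q7 : g₂⁻¹ (d - e₂ + 1) = d := inv_eval q9
        have q8 : g₃ d = d := F₃ _ (by omega)
        have q10 : g₁ (d - e₂ + 1) = d - e₂ + 1 := F₁ _ (by omega)
        rw [expand, q1, q2, q3, q4, q5, q6, q7, q8, q9, q10]
        omega
    · -- e₃ = d
      have heq : e₃ = d := by omega
      have q3 : g₂ e₃ = d - e₂ + 1 := by rw [heq]; exact E₂b (by omega)
      rcases Nat.lt_or_ge (d - e₂) 2 with hsm | hbg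
      · -- Case D : d - e₂ = 1
        have q4 : g₃ (d - e₂ + 1) = 1 :=
          E₃a (e₃ - (d - e₂) - 1) (d - e₂ + 1) 1 (by omega) (by omega) (by omega)
        have q5 : g₁⁻¹ 1 = e₃ := inv_eval E₁t
        have q6 : g₃⁻¹ e₃ = 1 := inv_eval E₃b
        have q7 : g₂⁻¹ 1 = 1 := inv_eval (F₂ 1 (by omega))
        have q8 : g₃ 1 = e₃ := E₃b
        have q10 : g₁ (d - e₂ + 1) = d - e₂ + 1 := F₁ _ (by omega)
        rw [expand, q1, q2, q3, q4, q5, q6, q7, q8, q3, q10]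
        omega
      · -- Case C : d - e₂ ≥ 2
        have q4 : g₃ (d - e₂ + 1) = d - e₂ :=
          E₃a (e₃ - (d - e₂) - 1) (d - e₂ + 1) (d - e₂) (by omega) (by omega) (by omega)
        have q10 : g₁ (d - e₂ - 1) = d - e₂ :=
          E₁c (d - e₂ - 1) (d - e₂ - 1) (d - e₂) (by omega) (by omega) (by omega) (by omega)
        have q5 : g₁⁻¹ (d - e₂) = d - e₂ - 1 := inv_eval q10
        have q8 : g₃ (d - e₂) = d - e₂ - 1 :=
          E₃a (e₃ - (d - e₂)) (d - e₂) (d - e₂ - 1) (by omega) (by omega) (by omega)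
        have q6 : g₃⁻¹ (d - e₂ - 1) = d - e₂ := inv_eval q8
        have q7 : g₂⁻¹ (d - e₂) = d - e₂ := inv_eval (F₂ _ (by omega))
        have q9 : g₂ (d - e₂ - 1) = d - e₂ - 1 := F₂ _ (by omega)
        rw [expand, q1, q2, q3, q4, q5, q6, q7, q8, q9, q10]
        omega
  refine ⟨fun h => hne ?_, hne⟩
  rw [h]; simp
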